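/- Let A be an abelian category with enough injectives, let W be a thick class of objects, and let (W₁, F₁) and (W₂, F₂) be injective cotorsion pairs. If W ∩ F₁ = F₂ and W₁ ⊆ W, then W₂ ∩ W = W₁; consequently (W₂, W, F₁) is a Hovey triple. -/
import Mathlib


open CategoryTheory CategoryTheory.Limits

universe w v u

variable {A : Type u} [Category.{v} A] [Abelian A]

/-- `IsShortExact i p` asserts that `0 → X → Y → Z → 0` is a short exact sequence. -/
def IsShortExact {X Y Z : A} (i : X ⟶ Y) (p : Y ⟶ Z) : Prop :=
  ∃ w : i ≫ p = 0, (ShortComplex.mk i p w).ShortExact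

section Ext

variable [HasExt.{w} A]

/-- `Ext¹(X, Y) = 0`. -/
def Ext1Zero (X Y : A) : Prop := Subsingleton (Abelian.Ext X Y 1)

/-- `(F, C)` is a cotorsion pair: each class is the `Ext¹`-orthogonal of the other. -/
def IsCotorsionPair (F C : Set A) : Prop :=
  (∀ X : A, X ∈ F ↔ ∀ Y ∈ C, Ext1Zero.{w} X Y) ∧
  (∀ Y : A, Y ∈ C ↔ ∀ X ∈ F, Ext1Zero.{w} X Y)

/-- A complete cotorsion pair: for every object `X` there are short exact sequences
`0 → C → F → X → 0` and `0 → X → C' → F' → 0` with `F, F'` in the left class and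
`C, C'` in the right class. -/
def IsCompleteCotorsionPair (F C : Set A) : Prop :=
  IsCotorsionPair.{w} F C ∧
  (∀ X : A, ∃ (Co Fo : A) (i : Co ⟶ Fo) (p : Fo ⟶ X),
    Co ∈ C ∧ Fo ∈ F ∧ IsShortExact i p) ∧
  (∀ X : A, ∃ (Co Fo : A) (i : X ⟶ Co) (p : Co ⟶ Fo),
    Co ∈ C ∧ Fo ∈ F ∧ IsShortExact i p)

end Ext

/-- A thick class: closed under direct summands (retracts) and satisfying two-out-of-three
for short exact sequences. -/
def IsThickClass (W : Set A) : Prop :=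
  (∀ (X Y : A) (s : Y ⟶ X) (r : X ⟶ Y), s ≫ r = 𝟙 Y → X ∈ W → Y ∈ W) ∧
  (∀ ⦃X Y Z : A⦄ (i : X ⟶ Y) (p : Y ⟶ Z), IsShortExact i p →
    (X ∈ W → Y ∈ W → Z ∈ W) ∧ (X ∈ W → Z ∈ W → Y ∈ W) ∧ (Y ∈ W → Z ∈ W → X ∈ W))

/-- The class `F` is closed under kernels of epimorphisms between objects of `F`. -/
def ClosedUnderKernelsOfEpis (F : Set A) : Prop :=
  ∀ ⦃X Y Z : A⦄ (i : X ⟶ Y) (p : Y ⟶ Z), IsShortExact i p → Y ∈ F → Z ∈ F → X ∈ F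

/-- The class `C` is closed under cokernels of monomorphisms between objects of `C`. -/
def ClosedUnderCokernelsOfMonos (C : Set A) : Prop :=
  ∀ ⦃X Y Z : A⦄ (i : X ⟶ Y) (p : Y ⟶ Z), IsShortExact i p → X ∈ C → Y ∈ C → Z ∈ C

/-- An injective cotorsion pair: a complete cotorsion pair `(W, F)` with `W` thick and
`W ∩ F` equal to the class of injective objects. -/
def IsInjectiveCotorsionPair [HasExt.{w} A] (W F : Set A) : Prop :=
  IsCompleteCotorsionPair.{w} W F ∧ IsThickClass W ∧
  ∀ X : A, (X ∈ W ∧ X ∈ F) ↔ Injective X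

/-- A projective cotorsion pair: a complete cotorsion pair `(C, W)` with `W` thick and
`C ∩ W` equal to the class of projective objects. -/
def IsProjectiveCotorsionPair [HasExt.{w} A] (C W : Set A) : Prop :=
  IsCompleteCotorsionPair.{w} C W ∧ IsThickClass W ∧
  ∀ X : A, (X ∈ C ∧ X ∈ W) ↔ Projective X

/-- A Hovey triple `(Q, W, R)`: `W` is thick and both `(Q, W ∩ R)` and `(Q ∩ W, R)` are
complete cotorsion pairs. -/
def IsHoveyTriple [HasExt.{w} A] (Q W R : Set A) : Prop :=
  IsThickClass W ∧ IsCompleteCotorsionPair.{w} Q (W ∩ R) ∧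
    IsCompleteCotorsionPair.{w} (Q ∩ W) R

theorem spotting_localizations_one [EnoughInjectives A] [HasExt.{w} A]
    (Wc : Set A) (hWc : IsThickClass Wc) (W₁ F₁ W₂ F₂ : Set A)
    (h1 : IsInjectiveCotorsionPair.{w} W₁ F₁) (h2 : IsInjectiveCotorsionPair.{w} W₂ F₂)
    (hWF : Wc ∩ F₁ = F₂) (hW1 : W₁ ⊆ Wc) :
    W₂ ∩ Wc = W₁ ∧ IsHoveyTriple.{w} W₂ Wc F₁ := by
  have hcc1 := h1.1
  obtain ⟨hc1, hth1, hinj1⟩ := h1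
  have hcc2 := h2.1
  obtain ⟨hc2, hth2, hinj2⟩ := h2
  obtain ⟨⟨hw1, hf1⟩, hres1, -⟩ := hc1
  obtain ⟨⟨hw2, hf2⟩, -, -⟩ := hc2
  have key : W₂ ∩ Wc = W₁ := by
    ext X
    constructor
    · rintro ⟨hX2, hXc⟩
      obtain ⟨F, Wo, i, p, hF, hW, hse⟩ := hres1 X
      have hFc : F ∈ Wc := ((hWc.2 i p hse).2.2) (hW1 hW) hXc
      have hFF2 : F ∈ F₂ := by rw [← hWF]; exact ⟨hFc, hF⟩
      have hExtXF : Ext1Zero.{w} X F := (hw2 X).1 hX2 F hFF2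
      obtain ⟨w0, hSE⟩ := hse
      rw [hw1]
      intro G hG
      have hWG : Ext1Zero.{w} Wo G := (hw1 Wo).1 hW G hG
      have hz : ∀ x : Abelian.Ext X G 1, x = 0 := by
        intro x
        have h0 : (Abelian.Ext.mk₀ p).comp x (zero_add 1) = 0 := by
          have : Subsingleton (Abelian.Ext Wo G 1) := hWG
          exact Subsingleton.elim _ _
        obtain ⟨y, hy⟩ := Abelian.Ext.contravariant_sequence_exact₃ hSE G x h0 (n₀ := 0) rfl
        have hcl : hSE.extClass = 0 := by
          have : Subsingleton (Abelian.Ext X F 1) := hExtXF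
          exact Subsingleton.elim _ _
        rw [← hy, hcl, Abelian.Ext.zero_comp]
      exact ⟨fun a b => by rw [hz a, hz b]⟩
    · intro hX1
      refine ⟨?_, hW1 hX1⟩
      rw [hw2]
      intro Y hY
      rw [← hWF] at hY
      exact (hw1 X).1 hX1 Y hY.2
  refine ⟨key, hWc, ?_, ?_⟩
  · rw [hWF]; exact hcc2
  · rw [key]; exact hcc1
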